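/- Let n >= 3 be an integer and let L, d be powers of two with d^2 dividing L. Define the block relation B = union over j in [L/d^2] of the set [(j-1)d + 1, j*d] × [(j-1)d + 1, j*d] (a disjoint union of L/d^2 complete blocks of size d × d). Consider the directed n-cycle query in which every one of the n relations equals B. Then |B| = L, the maximum out-degree of B is d, and the number of n-tuples (a_1, ..., a_n) with (a_i, a_{i+1 mod n}) in B for all i is exactly (L / d^2) * d^n = L * d^{n-2}. -/

import Mathlib

open Finset
open Fin.NatCast
private lemma blk_unique {d k k' x : ℕ} (hk : 1 ≤ k) (hk' : 1 ≤ k')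
    (h1 : (k-1)*d + 1 ≤ x) (h2 : x ≤ k*d) (h3 : (k'-1)*d + 1 ≤ x) (h4 : x ≤ k'*d) :
    k = k' := by
  by_contra hne
  rcases Nat.lt_or_ge k k' with h | h
  · have := Nat.mul_le_mul_right d (show k ≤ k' - 1 by omega)
    omega
  · have := Nat.mul_le_mul_right d (show k' ≤ k - 1 by omega)
    omega

private lemma blk_card {d k : ℕ} (hk : 1 ≤ k) :
    (Finset.Icc ((k-1)*d+1) (k*d)).card = d := by
  rw [Nat.card_Icc]
  obtain ⟨k, rfl⟩ := Nat.exists_eq_add_of_le hk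
  have h1 : 1 + k - 1 = k := by omega
  have h2 : (1 + k) * d = d + k * d := by ring
  rw [h1, h2]; omega

/-- Block-based hard instance for the directed `n`-cycle: for powers of two `L, d`
with `d² ∣ L`, the block relation `B = ⋃_{j∈[L/d²]} ((j-1)d, jd] × ((j-1)d, jd]`
has `|B| = L`, maximum out-degree `d`, and the `n`-cycle join over `n` copies of `B`
has exactly `(L/d²) · dⁿ = L · d^{n-2}` tuples. -/
theorem cycle_block_instance (n : ℕ) [NeZero n] (hn : 3 ≤ n)
    (L d i j : ℕ) (hL : L = 2 ^ i) (hd : d = 2 ^ j) (hdvd : d ^ 2 ∣ L)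
    (B : Finset (ℕ × ℕ))
    (hB : B = (Finset.Icc 1 (L / d ^ 2)).biUnion
      (fun k => Finset.Icc ((k - 1) * d + 1) (k * d) ×ˢ Finset.Icc ((k - 1) * d + 1) (k * d))) :
    B.card = L ∧
    (∀ a : ℕ, (B.filter (fun q => q.1 = a)).card ≤ d) ∧
    (∃ a : ℕ, (B.filter (fun q => q.1 = a)).card = d) ∧
    ((Fintype.piFinset (fun _ : Fin n => Finset.Icc 1 L)).filter
        (fun t : Fin n → ℕ => ∀ i : Fin n, (t i, t (i + 1)) ∈ B)).card
      = (L / d ^ 2) * d ^ n ∧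
    (L / d ^ 2) * d ^ n = L * d ^ (n - 2) := by
  have hd0 : 0 < d := by rw [hd]; positivity
  have hL0 : 0 < L := by rw [hL]; positivity
  set m := L / d ^ 2 with hm
  have hmd : m * d ^ 2 = L := Nat.div_mul_cancel hdvd
  have hm0 : 0 < m := by
    rcases Nat.eq_zero_or_pos m with h | h
    · rw [h] at hmd; omega
    · exact h
  -- disjointness of the product blocks
  have hdisj : ∀ k ∈ Finset.Icc 1 m, ∀ k' ∈ Finset.Icc 1 m, k ≠ k' →
      Disjoint (Finset.Icc ((k - 1) * d + 1) (k * d) ×ˢ Finset.Icc ((k - 1) * d + 1) (k * d))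
        (Finset.Icc ((k' - 1) * d + 1) (k' * d) ×ˢ Finset.Icc ((k' - 1) * d + 1) (k' * d)) := by
    intro k hk k' hk' hne
    simp only [Finset.mem_Icc] at hk hk'
    rw [Finset.disjoint_left]
    rintro ⟨x, y⟩ hxy hxy'
    simp only [Finset.mem_product, Finset.mem_Icc] at hxy hxy'
    exact hne (blk_unique hk.1 hk'.1 hxy.1.1 hxy.1.2 hxy'.1.1 hxy'.1.2)
  -- Part 1
  have part1 : B.card = L := by
    rw [hB, Finset.card_biUnion hdisj]
    have : ∀ k ∈ Finset.Icc 1 m, (Finset.Icc ((k - 1) * d + 1) (k * d) ×ˢ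
        Finset.Icc ((k - 1) * d + 1) (k * d)).card = d ^ 2 := by
      intro k hk
      simp only [Finset.mem_Icc] at hk
      rw [Finset.card_product, blk_card hk.1, sq]
    rw [Finset.sum_congr rfl this, Finset.sum_const, Nat.card_Icc, smul_eq_mul,
      Nat.add_sub_cancel]
    exact hmd
  -- key formula for out-degree
  have key : ∀ a : ℕ, (B.filter (fun q => q.1 = a)).card
      = ((Finset.Icc 1 m).filter
          (fun k => a ∈ Finset.Icc ((k - 1) * d + 1) (k * d))).card * d := by
    intro a
    have hterm : ∀ k : ℕ,
        ((Finset.Icc ((k - 1) * d + 1) (k * d) ×ˢ Finset.Icc ((k - 1) * d + 1) (k * d)).filter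
          (fun q => q.1 = a))
        = ((Finset.Icc ((k - 1) * d + 1) (k * d)).filter (fun x => x = a)) ×ˢ
            Finset.Icc ((k - 1) * d + 1) (k * d) := by
      intro k
      ext ⟨x, y⟩
      simp only [Finset.mem_filter, Finset.mem_product]
      tauto
    rw [hB, Finset.filter_biUnion]
    rw [Finset.card_biUnion (fun k hk k' hk' hne =>
      Disjoint.mono (Finset.filter_subset _ _) (Finset.filter_subset _ _)
        (hdisj k hk k' hk' hne))]
    have : ∀ k ∈ Finset.Icc 1 m,
        ((Finset.Icc ((k - 1) * d + 1) (k * d) ×ˢ Finset.Icc ((k - 1) * d + 1) (k * d)).filter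
          (fun q => q.1 = a)).card
        = (if a ∈ Finset.Icc ((k - 1) * d + 1) (k * d) then 1 else 0) * d := by
      intro k hk
      simp only [Finset.mem_Icc] at hk
      rw [hterm, Finset.card_product, blk_card hk.1, Finset.filter_eq']
      split <;> simp
    rw [Finset.sum_congr rfl this, ← Finset.sum_mul, ← Finset.card_filter]
  have hcard_le : ∀ a : ℕ, ((Finset.Icc 1 m).filter
      (fun k => a ∈ Finset.Icc ((k - 1) * d + 1) (k * d))).card ≤ 1 := by
    intro a
    apply Finset.card_le_one.2
    intro k hk k' hk'
    simp only [Finset.mem_filter, Finset.mem_Icc] at hk hk'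
    exact blk_unique hk.1.1 hk'.1.1 hk.2.1 hk.2.2 hk'.2.1 hk'.2.2
  refine ⟨part1, ?_, ?_, ?_, ?_⟩
  · intro a
    rw [key a]
    calc _ ≤ 1 * d := Nat.mul_le_mul_right d (hcard_le a)
      _ = d := one_mul d
  · refine ⟨1, ?_⟩
    have h1 : (1 : ℕ) ∈ (Finset.Icc 1 m).filter
        (fun k => (1 : ℕ) ∈ Finset.Icc ((k - 1) * d + 1) (k * d)) := by
      simp only [Finset.mem_filter, Finset.mem_Icc]
      omega
    have hle := hcard_le 1
    have hpos := Finset.card_pos.2 ⟨1, h1⟩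
    have hone : ((Finset.Icc 1 m).filter
        (fun k => (1 : ℕ) ∈ Finset.Icc ((k - 1) * d + 1) (k * d))).card = 1 := by omega
    rw [key 1, hone, one_mul]
  · -- Part 3: the join count
    have hblk_sub : ∀ k, 1 ≤ k → k ≤ m →
        ∀ x, (k - 1) * d + 1 ≤ x → x ≤ k * d → 1 ≤ x ∧ x ≤ L := by
      intro k hk1 hk2 x hx1 hx2
      have h1 : k * d ≤ m * d := Nat.mul_le_mul_right d hk2
      have h2 : m * d ≤ m * d ^ 2 :=
        Nat.mul_le_mul_left m (Nat.le_self_pow two_ne_zero d)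
      omega
    have hEq : ((Fintype.piFinset (fun _ : Fin n => Finset.Icc 1 L)).filter
        (fun t : Fin n → ℕ => ∀ i : Fin n, (t i, t (i + 1)) ∈ B))
        = (Finset.Icc 1 m).biUnion (fun k =>
            Fintype.piFinset (fun _ : Fin n => Finset.Icc ((k - 1) * d + 1) (k * d))) := by
      ext t
      simp only [Finset.mem_filter, Fintype.mem_piFinset, Finset.mem_biUnion, hB,
        Finset.mem_product, Finset.mem_Icc]
      constructor
      · rintro ⟨h1, h2⟩
        obtain ⟨k, ⟨hk1, hk2⟩, ⟨ha1, ha2⟩, hb1, hb2⟩ := h2 0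
        refine ⟨k, ⟨hk1, hk2⟩, ?_⟩
        have claim : ∀ r : ℕ, (k - 1) * d + 1 ≤ t (r : Fin n) ∧ t (r : Fin n) ≤ k * d := by
          intro r
          induction r with
          | zero => simpa using ⟨ha1, ha2⟩
          | succ r ih =>
            obtain ⟨k', ⟨hk'1, hk'2⟩, ⟨hc1, hc2⟩, hd1, hd2⟩ := h2 (r : Fin n)
            have : k' = k := blk_unique hk'1 hk1 hc1 hc2 ih.1 ih.2
            subst this
            have : ((r + 1 : ℕ) : Fin n) = (r : Fin n) + 1 := by push_cast; ring
            rw [this]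
            exact ⟨hd1, hd2⟩
        intro i
        have := claim i.val
        rwa [Fin.cast_val_eq_self] at this
      · rintro ⟨k, ⟨hk1, hk2⟩, hall⟩
        refine ⟨fun i => hblk_sub k hk1 hk2 (t i) (hall i).1 (hall i).2, ?_⟩
        intro i
        exact ⟨k, ⟨hk1, hk2⟩, hall i, hall (i + 1)⟩
    rw [hEq]
    rw [Finset.card_biUnion (fun k hk k' hk' hne => by
      simp only [Finset.mem_coe, Finset.mem_Icc] at hk hk'
      rw [Function.onFun, Finset.disjoint_left]
      intro t ht ht'
      simp only [Fintype.mem_piFinset, Finset.mem_Icc] at ht ht'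
      exact hne (blk_unique hk.1 hk'.1 (ht 0).1 (ht 0).2 (ht' 0).1 (ht' 0).2))]
    have : ∀ k ∈ Finset.Icc 1 m,
        (Fintype.piFinset (fun _ : Fin n => Finset.Icc ((k - 1) * d + 1) (k * d))).card
        = d ^ n := by
      intro k hk
      simp only [Finset.mem_Icc] at hk
      rw [Fintype.card_piFinset]
      simp [blk_card hk.1]
    rw [Finset.sum_congr rfl this, Finset.sum_const, Nat.card_Icc, Nat.add_sub_cancel,
      smul_eq_mul]
  · -- Part 4
    have h2 : d ^ (n - 2) * d ^ 2 = d ^ n := by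
      rw [← pow_add]; congr 1; omega
    calc m * d ^ n = m * (d ^ (n - 2) * d ^ 2) := by rw [h2]
      _ = (m * d ^ 2) * d ^ (n - 2) := by ring
      _ = L * d ^ (n - 2) := by rw [hmd]
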